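/- Let n ≥ 1, let p : Fin n → ℝ satisfy p i ≥ 0 for all i and 0 < ∑_i p i ≤ 1, let X : Fin n → ℝ, and let λ > 0 be a real number such that |X i| ≤ λ for every i with p i > 0. Then λ · Real.log (∑_i p i · Real.exp (X i / λ)) ≤ ∑_i p i · X i + (1/λ) · ∑_i p i · (X i)². -/

import Mathlib

lemma exp_quad_bound {t : ℝ} (ht : |t| ≤ 1) : Real.exp t ≤ 1 + t + t ^ 2 := by
  have h := Real.exp_bound ht (n := 2) (by norm_num)
  have hsum : ∑ i ∈ Finset.range 2, t ^ i / (Nat.factorial i) = 1 + t := by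
    simp [Finset.sum_range_succ, Nat.factorial]
  rw [hsum] at h
  have h2 : Real.exp t - (1 + t) ≤ |t| ^ 2 * (3 / (2 * 2)) := by
    have := abs_le.mp h
    simpa [Nat.factorial] using this.2
  have h3 : |t| ^ 2 = t ^ 2 := sq_abs t
  nlinarith [sq_nonneg t]

theorem stmt_19 (n : ℕ) (hn : 0 < n) (p : Fin n → ℝ)
    (hp : ∀ i, 0 ≤ p i) (hps_pos : 0 < ∑ i, p i) (hps_le : ∑ i, p i ≤ 1)
    (X : Fin n → ℝ) (l : ℝ) (hl : 0 < l)
    (hX : ∀ i, 0 < p i → |X i| ≤ l) :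
    l * Real.log (∑ i, p i * Real.exp (X i / l)) ≤
      ∑ i, p i * X i + (1 / l) * ∑ i, p i * X i ^ 2 := by
  set S := ∑ i, p i * Real.exp (X i / l) with hS
  -- S is positive
  obtain ⟨j, hj⟩ : ∃ j, 0 < p j := by
    by_contra h
    push_neg at h
    have : ∑ i, p i ≤ 0 := Finset.sum_nonpos (fun i _ => h i)
    linarith
  have hSpos : 0 < S := by
    apply Finset.sum_pos' (fun i _ => mul_nonneg (hp i) (Real.exp_pos _).le)
    exact ⟨j, Finset.mem_univ j, mul_pos hj (Real.exp_pos _)⟩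
  -- pointwise bound
  have hterm : ∀ i, p i * Real.exp (X i / l) ≤
      p i * (1 + X i / l + (X i / l) ^ 2) := by
    intro i
    rcases eq_or_lt_of_le (hp i) with h | h
    · simp [← h]
    · apply mul_le_mul_of_nonneg_left _ (hp i)
      apply exp_quad_bound
      rw [abs_div, abs_of_pos hl, div_le_one hl]
      exact hX i h
  have hSle : S ≤ 1 + (∑ i, p i * X i) / l + (∑ i, p i * X i ^ 2) / l ^ 2 := by
    calc S ≤ ∑ i, p i * (1 + X i / l + (X i / l) ^ 2) :=
          Finset.sum_le_sum (fun i _ => hterm i)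
      _ = (∑ i, p i) + (∑ i, p i * X i) / l + (∑ i, p i * X i ^ 2) / l ^ 2 := by
          rw [Finset.sum_div, Finset.sum_div, ← Finset.sum_add_distrib,
            ← Finset.sum_add_distrib]
          apply Finset.sum_congr rfl
          intro i _
          field_simp
      _ ≤ 1 + (∑ i, p i * X i) / l + (∑ i, p i * X i ^ 2) / l ^ 2 := by
          linarith
  have hlog : Real.log S ≤ S - 1 := Real.log_le_sub_one_of_pos hSpos
  have : l * Real.log S ≤ l * (S - 1) := by
    exact mul_le_mul_of_nonneg_left hlog hl.le
  have hfinal : l * (S - 1) ≤ ∑ i, p i * X i + (1 / l) * ∑ i, p i * X i ^ 2 := by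
    have h1 : l * (S - 1) ≤ l * ((∑ i, p i * X i) / l + (∑ i, p i * X i ^ 2) / l ^ 2) := by
      apply mul_le_mul_of_nonneg_left _ hl.le
      linarith
    have h2 : l * ((∑ i, p i * X i) / l + (∑ i, p i * X i ^ 2) / l ^ 2) =
        ∑ i, p i * X i + (1 / l) * ∑ i, p i * X i ^ 2 := by
      field_simp
    linarith
  linarith
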